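/- arXiv:2002.01906 — 3 statements merged into one kernel-verified Lean document; each statement's English description precedes it below -/
import Mathlib

section
/- A point (r,s) ∈ (ℝ/ℤ)² has finite orbit under the right action of a finite-index subgroup G ≤ SL₂(ℤ) if and only if (r,s) ∈ (ℚ/ℤ)². -/
open AddCircle Matrix

/-- torsion iff rational on `ℝ/ℤ`. -/
lemma aux_finAddOrder_iff_rat (x : AddCircle (1 : ℝ)) :
    IsOfFinAddOrder x ↔ ∃ q : ℚ, x = ((q : ℝ) : AddCircle (1 : ℝ)) := by
  constructor
  · intro h
    obtain ⟨m, _, _, he⟩ := AddCircle.exists_gcd_eq_one_of_isOfFinAddOrder h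
    refine ⟨(m : ℚ) / (addOrderOf x : ℚ), ?_⟩
    conv_lhs => rw [← he]
    push_cast
    norm_num
  · rintro ⟨q, rfl⟩
    have h1 : ((q : ℝ) : AddCircle (1 : ℝ)) = (((q : ℝ) * 1 : ℝ) : AddCircle (1 : ℝ)) := by
      norm_num
    rw [h1, ← addOrderOf_pos_iff, AddCircle.addOrderOf_coe_rat]
    exact q.pos

set_option maxHeartbeats 1000000 in
/-- the `N`-torsion subset of `ℝ/ℤ` is finite. -/
lemma aux_torsion_finite (N : ℕ) (hN : 0 < N) :
    {x : AddCircle (1 : ℝ) | (N : ℤ) • x = 0}.Finite := by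
  have hNR : (N : ℝ) ≠ 0 := Nat.cast_ne_zero.mpr hN.ne'
  apply Set.Finite.subset (Set.finite_range
    (fun k : Fin N => ((((k : ℕ) : ℝ) / (N : ℝ) : ℝ) : AddCircle (1 : ℝ))))
  intro x hx
  obtain ⟨y, rfl⟩ := QuotientAddGroup.mk_surjective x
  simp only [Set.mem_setOf_eq] at hx
  have hx' : (((N : ℝ) * y : ℝ) : AddCircle (1 : ℝ)) = 0 := by
    rw [← hx, ← AddCircle.coe_zsmul, zsmul_eq_mul]
    push_cast
    ring_nf
  rw [AddCircle.coe_eq_zero_iff] at hx'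
  obtain ⟨j, hj⟩ := hx'
  rw [zsmul_eq_mul, mul_one] at hj
  set j' : ℤ := j % (N : ℤ) with hj'def
  set d : ℤ := j / (N : ℤ) with hddef
  have hjd : (N : ℤ) * d + j' = j := Int.mul_ediv_add_emod j N
  have hj'0 : 0 ≤ j' := Int.emod_nonneg j (by exact_mod_cast hN.ne')
  have hj'N : j' < (N : ℤ) := Int.emod_lt_of_pos j (by exact_mod_cast hN)
  refine ⟨⟨j'.toNat, by omega⟩, ?_⟩
  have hy : y = (j : ℝ) / N := by
    field_simp
    linarith [hj]
  have hsub : ((j'.toNat : ℕ) : ℝ) / (N : ℝ) = y + (-d : ℤ) • (1 : ℝ) := by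
    rw [hy, zsmul_eq_mul, mul_one]
    have h1 : ((j'.toNat : ℕ) : ℝ) = (j' : ℝ) := by
      exact_mod_cast congrArg (Int.cast : ℤ → ℝ) (Int.toNat_of_nonneg hj'0)
    have h2 : (j : ℝ) = (N : ℝ) * (d : ℝ) + (j' : ℝ) := by exact_mod_cast hjd.symm
    rw [h1, h2]
    field_simp
    push_cast
    ring
  show ((((j'.toNat : ℕ) : ℝ) / (N : ℝ) : ℝ) : AddCircle (1 : ℝ)) = (y : AddCircle (1 : ℝ))
  rw [hsub, AddCircle.coe_add, AddCircle.coe_zsmul, AddCircle.coe_period, smul_zero, add_zero]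

lemma aux_of_smul_eq {x : AddCircle (1 : ℝ)} {a b : ℕ} (hab : a < b)
    (h : ((a : ℕ) : ℤ) • x = ((b : ℕ) : ℤ) • x) : IsOfFinAddOrder x := by
  rw [isOfFinAddOrder_iff_nsmul_eq_zero]
  refine ⟨b - a, by omega, ?_⟩
  have h1 : (((b - a : ℕ) : ℤ)) • x = 0 := by
    rw [Nat.cast_sub hab.le, sub_zsmul, ← h]
    simp
  rwa [natCast_zsmul] at h1

/-- key step: finiteness of an arithmetic-progression orbit forces rationality. -/
lemma aux_key (x y : AddCircle (1 : ℝ)) (m : ℕ) (hm : 0 < m)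
    (h : (Set.range fun k : ℕ => ((k * m : ℕ) : ℤ) • x + y).Finite) :
    ∃ q : ℚ, x = ((q : ℝ) : AddCircle (1 : ℝ)) := by
  haveI := h.to_subtype
  obtain ⟨k₁, k₂, hne, heq⟩ := Finite.exists_ne_map_eq_of_infinite
    (fun k : ℕ => (⟨((k * m : ℕ) : ℤ) • x + y, Set.mem_range_self k⟩ :
      Set.range fun k : ℕ => ((k * m : ℕ) : ℤ) • x + y))
  rw [Subtype.mk.injEq, add_left_inj] at heq
  rw [← aux_finAddOrder_iff_rat]
  rcases hne.lt_or_gt with hlt | hlt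
  · exact aux_of_smul_eq (Nat.mul_lt_mul_of_lt_of_le hlt le_rfl hm) heq
  · exact aux_of_smul_eq (Nat.mul_lt_mul_of_lt_of_le hlt le_rfl hm) heq.symm

/-- the lower-triangular unipotent. -/
def auxU : Matrix.SpecialLinearGroup (Fin 2) ℤ :=
  ⟨!![1, 0; 1, 1], by norm_num [Matrix.det_fin_two_of]⟩

lemma auxU_pow (n : ℕ) :
    ((auxU ^ n : Matrix.SpecialLinearGroup (Fin 2) ℤ) : Matrix (Fin 2) (Fin 2) ℤ)
      = !![1, 0; (n : ℤ), 1] := by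
  induction n with
  | zero => simp [Matrix.one_fin_two]
  | succ n ih =>
    rw [pow_succ, Matrix.SpecialLinearGroup.coe_mul, ih]
    show (!![1, 0; (n : ℤ), 1] : Matrix (Fin 2) (Fin 2) ℤ) * !![1, 0; 1, 1] = _
    rw [Matrix.mul_fin_two]
    push_cast
    norm_num

lemma aux_zsmul_swap (a N : ℤ) (x : AddCircle (1 : ℝ)) (h : N • x = 0) :
    N • (a • x) = 0 := by
  rw [smul_smul, mul_comm, ← smul_smul, h, smul_zero]

/-- A point `(r,s) ∈ (ℝ/ℤ)²` has finite orbit under the right action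
`(r,s)·g = (a r + c s, b r + d s)` of a finite-index subgroup `G ≤ SL₂(ℤ)`
if and only if `(r,s) ∈ (ℚ/ℤ)²`. -/
theorem stmt3 (G : Subgroup (Matrix.SpecialLinearGroup (Fin 2) ℤ))
    (hG : G.FiniteIndex) (r s : AddCircle (1 : ℝ)) :
    {p : AddCircle (1 : ℝ) × AddCircle (1 : ℝ) |
        ∃ g : Matrix.SpecialLinearGroup (Fin 2) ℤ, g ∈ G ∧
          p = ((g : Matrix (Fin 2) (Fin 2) ℤ) 0 0 • r + (g : Matrix (Fin 2) (Fin 2) ℤ) 1 0 • s,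
               (g : Matrix (Fin 2) (Fin 2) ℤ) 0 1 • r + (g : Matrix (Fin 2) (Fin 2) ℤ) 1 1 • s)}.Finite
      ↔ (∃ q : ℚ, r = ((q : ℝ) : AddCircle (1 : ℝ))) ∧
        (∃ q : ℚ, s = ((q : ℝ) : AddCircle (1 : ℝ))) := by
  constructor
  · intro hfin
    obtain ⟨m, hm, -, hTm⟩ :=
      Subgroup.exists_pow_mem_of_index_ne_zero hG.index_ne_zero ModularGroup.T
    obtain ⟨n, hn, -, hUn⟩ :=
      Subgroup.exists_pow_mem_of_index_ne_zero hG.index_ne_zero auxU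
    constructor
    · refine aux_key r s m hm (Set.Finite.subset (hfin.image Prod.snd) ?_)
      rintro - ⟨k, rfl⟩
      refine ⟨_, ⟨ModularGroup.T ^ (k * m), ?_, rfl⟩, ?_⟩
      · rw [show k * m = m * k from mul_comm k m, pow_mul]
        exact pow_mem hTm k
      · have hcoe : ((ModularGroup.T ^ (k * m) : Matrix.SpecialLinearGroup (Fin 2) ℤ) :
            Matrix (Fin 2) (Fin 2) ℤ) = !![1, ((k * m : ℕ) : ℤ); 0, 1] := by
          rw [← zpow_natCast, ModularGroup.coe_T_zpow]
        simp [hcoe]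
    · refine aux_key s r n hn (Set.Finite.subset (hfin.image Prod.fst) ?_)
      rintro - ⟨k, rfl⟩
      refine ⟨_, ⟨auxU ^ (k * n), ?_, rfl⟩, ?_⟩
      · rw [show k * n = n * k from mul_comm k n, pow_mul]
        exact pow_mem hUn k
      · rw [auxU_pow]
        simp [add_comm]
  · rintro ⟨⟨q₁, rfl⟩, ⟨q₂, rfl⟩⟩
    obtain ⟨N₁, hN₁, hN₁z⟩ := isOfFinAddOrder_iff_nsmul_eq_zero.mp
      ((aux_finAddOrder_iff_rat _).mpr ⟨q₁, rfl⟩)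
    obtain ⟨N₂, hN₂, hN₂z⟩ := isOfFinAddOrder_iff_nsmul_eq_zero.mp
      ((aux_finAddOrder_iff_rat _).mpr ⟨q₂, rfl⟩)
    have hN : 0 < N₁ * N₂ := Nat.mul_pos hN₁ hN₂
    have hr : ((N₁ * N₂ : ℕ) : ℤ) • ((q₁ : ℝ) : AddCircle (1 : ℝ)) = 0 := by
      rw [natCast_zsmul, mul_nsmul, hN₁z, smul_zero]
    have hs : ((N₁ * N₂ : ℕ) : ℤ) • ((q₂ : ℝ) : AddCircle (1 : ℝ)) = 0 := by
      rw [natCast_zsmul, mul_comm, mul_nsmul, hN₂z, smul_zero]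
    apply Set.Finite.subset ((aux_torsion_finite _ hN).prod (aux_torsion_finite _ hN))
    rintro - ⟨g, -, rfl⟩
    refine ⟨?_, ?_⟩
    · show ((N₁ * N₂ : ℕ) : ℤ) • _ = 0
      rw [smul_add, aux_zsmul_swap _ _ _ hr, aux_zsmul_swap _ _ _ hs, add_zero]
    · show ((N₁ * N₂ : ℕ) : ℤ) • _ = 0
      rw [smul_add, aux_zsmul_swap _ _ _ hr, aux_zsmul_swap _ _ _ hs, add_zero]
end

section
/- If f is a holomorphic function on the open unit disk, not identically zero, vanishing to order n at 0, then for all sufficiently small r > 0 the winding number around 0 of the loop t ↦ f(re^{2πit}) equals n. -/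
/-- `w` is the winding number around `0` of the nowhere-vanishing loop
`t ↦ g t` (parametrized by `t ∈ [0,1]`): there is a continuous lift `θ` of
the argument (divided by `2π`) along the loop, and `w = θ 1 - θ 0`. -/
def IsWindingNumber (g : ℝ → ℂ) (w : ℝ) : Prop :=
  (∀ t : ℝ, g t ≠ 0) ∧
  ∃ θ : ℝ → ℝ, Continuous θ ∧
    (∀ t : ℝ, g t = (‖g t‖ : ℂ) *
      Complex.exp (2 * Real.pi * Complex.I * (θ t : ℂ))) ∧
    w = θ 1 - θ 0

open Complex Filter in
private lemma stmt10_factor (f : ℂ → ℂ) (hf : DifferentiableOn ℂ f (Metric.ball 0 1))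
    (n : ℕ) (hvanish : ∀ k < n, iteratedDeriv k f 0 = 0)
    (hn : iteratedDeriv n f 0 ≠ 0) :
    ∃ (g : ℂ → ℂ), AnalyticAt ℂ g 0 ∧ g 0 ≠ 0 ∧ ∀ᶠ z in nhds 0, f z = z ^ n * g z := by
  have hA : AnalyticAt ℂ f 0 := hf.analyticAt (Metric.ball_mem_nhds 0 one_pos)
  obtain ⟨p, hp⟩ := hA
  have hcoeff : ∀ k : ℕ, iteratedDeriv k f 0 = (Nat.factorial k : ℂ) • p.coeff k := by
    intro k
    obtain ⟨R, hR⟩ := hp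
    have h1 := hR.factorial_smul (1 : ℂ) k
    rw [iteratedDeriv_eq_iteratedFDeriv, ← h1, FormalMultilinearSeries.coeff,
      ← Nat.cast_smul_eq_nsmul ℂ]
    rfl
  have hpk : ∀ k < n, p k = 0 := by
    intro k hk
    have := hcoeff k
    rw [hvanish k hk] at this
    have : p.coeff k = 0 := by
      have h2 : (Nat.factorial k : ℂ) ≠ 0 := by exact_mod_cast Nat.factorial_ne_zero k
      rw [eq_comm, smul_eq_zero] at this
      exact this.resolve_left h2
    rwa [FormalMultilinearSeries.coeff_eq_zero] at this
  have hpn : p n ≠ 0 := by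
    rw [Ne, ← FormalMultilinearSeries.coeff_eq_zero]
    intro h
    apply hn
    rw [hcoeff n, h, smul_zero]
  have hpne : p ≠ 0 := fun h => hpn (by simp [h])
  have hord : p.order = n := by
    have h1 : p.order ≤ n := Nat.sInf_le hpn
    have h2 : n ≤ p.order := by
      by_contra h
      push_neg at h
      exact FormalMultilinearSeries.apply_order_ne_zero hpne (hpk _ h)
    omega
  refine ⟨(Function.swap dslope 0)^[n] f, ⟨_, hord ▸ hp.has_fpower_series_iterate_dslope_fslope p.order⟩,
    hord ▸ hp.iterate_dslope_fslope_ne_zero hpne, ?_⟩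
  have := hp.eq_pow_order_mul_iterate_dslope
  rw [hord] at this
  filter_upwards [Filter.Eventually.of_forall this] with z hz
  simpa [smul_eq_mul] using hz

open Complex Filter in
private lemma stmt10_main (f : ℂ → ℂ) (g : ℂ → ℂ) (n : ℕ)
    (hg_an : AnalyticAt ℂ g 0) (hg0 : g 0 ≠ 0)
    (heq : ∀ᶠ z in nhds 0, f z = z ^ n * g z) :
    ∃ r₀ > 0, r₀ ≤ 1 ∧ ∀ r : ℝ, 0 < r → r < r₀ →
      IsWindingNumber
        (fun t : ℝ => f (r * Complex.exp (2 * Real.pi * Complex.I * (t : ℂ)))) n := by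
  have hgpos : 0 < ‖g 0‖ := by simpa [norm_pos_iff] using hg0
  have hball : ∀ᶠ z in nhds 0, g z ∈ Metric.ball (g 0) (‖g 0‖ / 2) :=
    hg_an.continuousAt (Metric.ball_mem_nhds _ (by positivity))
  have hconts : ∀ᶠ z in nhds 0, AnalyticAt ℂ g z := hg_an.eventually_analyticAt
  obtain ⟨δ, hδ, hδP⟩ := Metric.eventually_nhds_iff.mp ((heq.and hball).and hconts)
  refine ⟨min δ 1, lt_min hδ one_pos, min_le_right _ _, fun r hr hrδ => ?_⟩
  set e : ℝ → ℂ := fun t => Complex.exp (2 * Real.pi * Complex.I * (t : ℂ)) with he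
  have habs_e : ∀ t : ℝ, ‖e t‖ = 1 := by
    intro t; simp [he, Complex.norm_exp]
  set z : ℝ → ℂ := fun t => (r : ℂ) * e t with hz
  have hz_small : ∀ t : ℝ, dist (z t) 0 < δ := by
    intro t
    rw [dist_zero_right, hz]
    simp only [norm_mul, habs_e, mul_one, Complex.norm_real, Real.norm_eq_abs,
      abs_of_pos hr]
    exact hrδ.trans_le (min_le_left _ _)
  have hcont_e : Continuous e := by
    exact Complex.continuous_exp.comp (continuous_const.mul Complex.continuous_ofReal)
  have hcont_z : Continuous z := continuous_const.mul hcont_e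
  set G : ℝ → ℂ := fun t => g (z t) with hG
  have hG_ball : ∀ t, ‖G t - g 0‖ < ‖g 0‖ / 2 := by
    intro t
    have := ((hδP (hz_small t)).1).2
    rwa [Metric.mem_ball, Complex.dist_eq] at this
  have hG_ne : ∀ t, G t ≠ 0 := by
    intro t h
    have := hG_ball t
    rw [h, zero_sub, norm_neg] at this
    linarith
  have hcont_G : Continuous G := by
    rw [continuous_iff_continuousAt]
    intro t
    exact ((hδP (hz_small t)).2).continuousAt.comp hcont_z.continuousAt
  have hGd : ∀ t, ‖G t / g 0 - 1‖ < 1 / 2 := by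
    intro t
    have h1 : G t / g 0 - 1 = (G t - g 0) / g 0 := by field_simp
    rw [h1, norm_div, div_lt_iff₀ hgpos]
    linarith [hG_ball t]
  have hre : ∀ t, 1 / 2 < (G t / g 0).re := by
    intro t
    have h1 := Complex.abs_re_le_norm (G t / g 0 - 1)
    rw [Complex.sub_re, Complex.one_re] at h1
    have h2 := (abs_lt.mp (h1.trans_lt (hGd t))).1
    linarith
  have hslit : ∀ t, G t / g 0 ∈ Complex.slitPlane := fun t =>
    Complex.mem_slitPlane_iff.mpr (Or.inl (by linarith [hre t]))
  set a : ℝ := Complex.arg (g 0) with ha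
  set θ : ℝ → ℝ := fun t => n * t + (a + Complex.arg (G t / g 0)) / (2 * Real.pi) with hθ
  have hcont_θ : Continuous θ := by
    refine (continuous_const.mul continuous_id).add (Continuous.div_const ?_ _)
    refine continuous_const.add ?_
    rw [continuous_iff_continuousAt]
    intro t
    show ContinuousAt (Complex.arg ∘ fun t => G t / g 0) t
    have h1 : ContinuousAt (fun w : ℂ => Complex.arg w) (G t / g 0) :=
      Complex.continuousAt_arg (hslit t)
    have h2 : ContinuousAt (fun t => G t / g 0) t := (hcont_G.div_const (g 0)).continuousAt
    exact ContinuousAt.comp (f := fun s : ℝ => G s / g 0) h1 h2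
  have hz_ne : ∀ t, z t ≠ 0 := fun t =>
    mul_ne_zero (by exact_mod_cast hr.ne') (Complex.exp_ne_zero _)
  refine ⟨?_, θ, hcont_θ, ?_, ?_⟩
  · intro t h
    have hfeq : f (z t) = z t ^ n * G t := (hδP (hz_small t)).1.1
    exact mul_ne_zero (pow_ne_zero n (hz_ne t)) (hG_ne t) (hfeq ▸ h)
  · intro t
    set b : ℝ := Complex.arg (G t / g 0) with hb
    have hfeq : f (z t) = z t ^ n * G t := (hδP (hz_small t)).1.1
    have habsG : ‖G t‖ = ‖g 0‖ * ‖G t / g 0‖ := by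
      rw [norm_div]
      field_simp
    have hGdec : G t = (‖g 0‖ : ℂ) * Complex.exp (a * I) *
        ((‖G t / g 0‖ : ℂ) * Complex.exp (b * I)) := by
      rw [ha, hb, Complex.norm_mul_exp_arg_mul_I, Complex.norm_mul_exp_arg_mul_I,
        mul_comm, div_mul_cancel₀ _ hg0]
    have habsf : ‖f (z t)‖ = r ^ n * ‖G t‖ := by
      rw [hfeq, norm_mul, norm_pow, hz, norm_mul, habs_e, mul_one, Complex.norm_real, Real.norm_eq_abs,
        abs_of_pos hr]
    have hsplit : 2 * (Real.pi : ℂ) * I * ((θ t : ℝ) : ℂ) =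
        (n : ℂ) * (2 * Real.pi * I * t) + a * I + b * I := by
      rw [hθ]
      have hπ : (Real.pi : ℂ) ≠ 0 := by exact_mod_cast Real.pi_ne_zero
      push_cast
      field_simp
      ring
    have hepow : e t ^ n = Complex.exp ((n : ℂ) * (2 * Real.pi * I * t)) := by
      rw [Complex.exp_nat_mul]
    show f (z t) = (‖f (z t)‖ : ℂ) * Complex.exp (2 * Real.pi * I * ((θ t : ℝ) : ℂ))
    have hzpow : z t ^ n = ((r : ℂ)) ^ n * Complex.exp ((n : ℂ) * (2 * Real.pi * I * t)) := by
      simp only [hz]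
      rw [mul_pow, hepow]
    rw [hsplit, Complex.exp_add, Complex.exp_add, habsf, habsG, hfeq, hzpow]
    conv_lhs => rw [hGdec]
    push_cast
    ring
  · have hG10 : G 1 = G 0 := by
      have : e 1 = e 0 := by
        simp [he, Complex.exp_two_pi_mul_I]
      simp [hG, hz, this]
    simp only [hθ, hG10]
    ring

/-- If `f` is holomorphic on the open unit disk, not identically zero, vanishing to
order `n` at `0`, then for all sufficiently small `r > 0` the winding number around
`0` of the loop `t ↦ f(re^{2πit})` equals `n`. -/
theorem stmt10 (f : ℂ → ℂ) (hf : DifferentiableOn ℂ f (Metric.ball 0 1))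
    (n : ℕ) (hvanish : ∀ k < n, iteratedDeriv k f 0 = 0)
    (hn : iteratedDeriv n f 0 ≠ 0) :
    ∃ r₀ > 0, r₀ ≤ 1 ∧ ∀ r : ℝ, 0 < r → r < r₀ →
      IsWindingNumber
        (fun t : ℝ => f (r * Complex.exp (2 * Real.pi * Complex.I * (t : ℂ)))) n := by
  obtain ⟨g, hg_an, hg0, heq⟩ := stmt10_factor f hf n hvanish hn
  exact stmt10_main f g n hg_an hg0 heq
end

section
/- The point P = (1,1) on the elliptic curve E₁: y² = x³ - t x + t over ℚ(t) has infinite order in the group of ℚ(t)-rational points. -/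
/-- The elliptic curve `E₁ : y² = x³ - t x + t` over `ℚ(t)`. -/
noncomputable def E₁ : WeierstrassCurve.Affine (RatFunc ℚ) :=
  { a₁ := 0, a₂ := 0, a₃ := 0, a₄ := -RatFunc.X, a₆ := RatFunc.X }

namespace Stmt15Aux

section PolyLemmas

open Polynomial

/-- The cubic `p³ - t p + t` has no root in `ℚ[t]`. -/
lemma aux_cubic (p : ℚ[X]) : p ^ 3 - X * p + X ≠ 0 := by
  intro h
  rcases eq_or_ne p.natDegree 0 with hd | hd
  · obtain ⟨c, rfl⟩ := natDegree_eq_zero.mp hd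
    have e0 := congrArg (eval 0) h
    have e1 := congrArg (eval 1) h
    simp at e0 e1
    rw [e0] at e1; norm_num at e1
  · have hp : p ≠ 0 := fun h0 => hd (by simp [h0])
    have heq : p ^ 3 = X * (p - C 1) := by
      simp only [map_one]; linear_combination h
    have h3 : (p ^ 3).natDegree = 3 * p.natDegree := natDegree_pow p 3
    have hle : (X * (p - C 1)).natDegree ≤ 1 + p.natDegree := by
      refine natDegree_mul_le.trans ?_
      rw [natDegree_X, natDegree_sub_C]
    rw [heq] at h3
    omega

/-- The quartic `p⁴ - 4p³ + 2tp² - 4tp + t² - 4t` has no root in `ℚ[t]`. -/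
lemma aux_quartic (p : ℚ[X]) :
    p ^ 4 - 4 * p ^ 3 + 2 * X * p ^ 2 - 4 * X * p + X ^ 2 - 4 * X ≠ 0 := by
  intro h
  rcases eq_or_ne p.natDegree 0 with hd | hd
  · obtain ⟨c, rfl⟩ := natDegree_eq_zero.mp hd
    have e0 := congrArg (eval 0) h
    have e1 := congrArg (eval 1) h
    have e2 := congrArg (eval (-1)) h
    simp at e0 e1 e2
    nlinarith [e0, e1, e2]
  · have hp : p ≠ 0 := fun h0 => hd (by simp [h0])
    have hp4 : p - C 4 ≠ 0 := by
      intro h0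
      have : p = C 4 := by linear_combination h0
      rw [this] at hd; simp at hd
    have heq : p ^ 3 * (p - C 4) = -(2 * X * p ^ 2) + (4 * X * p + (-(X ^ 2) + 4 * X)) := by
      simp only [map_ofNat]; linear_combination h
    have h4 : (p ^ 3 * (p - C 4)).natDegree = 4 * p.natDegree := by
      rw [natDegree_mul (pow_ne_zero 3 hp) hp4, natDegree_pow, natDegree_sub_C]
      ring
    have hle : (-(2 * X * p ^ 2) + (4 * X * p + (-(X ^ 2) + 4 * X))).natDegree
        ≤ 2 * p.natDegree + 1 := by
      have b1 : (2 * X * p ^ 2).natDegree ≤ 2 * p.natDegree + 1 := by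
        refine natDegree_mul_le.trans ?_
        have : ((2 : ℚ[X]) * X).natDegree ≤ 1 := natDegree_mul_le.trans (by simp)
        simp only [natDegree_pow]
        omega
      have b2 : (4 * X * p).natDegree ≤ 2 * p.natDegree + 1 := by
        refine natDegree_mul_le.trans ?_
        have : ((4 : ℚ[X]) * X).natDegree ≤ 1 := natDegree_mul_le.trans (by simp)
        omega
      have b3 : ((-(X ^ 2) + 4 * X : ℚ[X])).natDegree ≤ 2 * p.natDegree + 1 := by
        refine (natDegree_add_le _ _).trans ?_
        have : ((4 : ℚ[X]) * X).natDegree ≤ 1 := natDegree_mul_le.trans (by simp)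
        simp only [natDegree_neg, natDegree_pow, natDegree_X]
        omega
      refine (natDegree_add_le _ _).trans ?_
      rw [natDegree_neg]
      refine max_le b1 ((natDegree_add_le _ _).trans (max_le b2 b3))
    rw [heq] at h4
    omega

/-- The cubic `x³ - t x + t` has no root in `ℚ(t)`. -/
lemma rat_cubic (x : RatFunc ℚ) : x ^ 3 - RatFunc.X * x + RatFunc.X ≠ 0 := by
  intro hx
  have hint : IsIntegral ℚ[X] x := by
    refine ⟨X ^ 3 - C X * X + C X, ?_, ?_⟩
    · monicity!
    · simp only [eval₂_add, eval₂_sub, eval₂_mul, eval₂_pow, eval₂_C, eval₂_X,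
        RatFunc.algebraMap_X]
      exact hx
  obtain ⟨p, hp⟩ := IsIntegrallyClosed.isIntegral_iff.mp hint
  have h0 : p ^ 3 - X * p + X = 0 := by
    apply RatFunc.algebraMap_injective ℚ
    rw [map_zero, map_add, map_sub, map_pow, map_mul, hp, RatFunc.algebraMap_X]
    exact hx
  exact aux_cubic p h0

/-- The quartic `x⁴ - 4x³ + 2tx² - 4tx + t² - 4t` has no root in `ℚ(t)`. -/
lemma rat_quartic (x : RatFunc ℚ) :
    x ^ 4 - 4 * x ^ 3 + 2 * RatFunc.X * x ^ 2 - 4 * RatFunc.X * x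
      + RatFunc.X ^ 2 - 4 * RatFunc.X ≠ 0 := by
  intro hx
  have hint : IsIntegral ℚ[X] x := by
    refine ⟨X ^ 4 - C 4 * X ^ 3 + C (2 * X) * X ^ 2 - C (4 * X) * X + C (X ^ 2 - 4 * X),
      ?_, ?_⟩
    · monicity!
    · simp only [eval₂_add, eval₂_sub, eval₂_mul, eval₂_pow, eval₂_C, eval₂_X, eval₂_ofNat,
        map_sub, map_mul, map_pow, map_ofNat, RatFunc.algebraMap_X]
      linear_combination hx
  obtain ⟨p, hp⟩ := IsIntegrallyClosed.isIntegral_iff.mp hint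
  have h0 : p ^ 4 - 4 * p ^ 3 + 2 * X * p ^ 2 - 4 * X * p + X ^ 2 - 4 * X = 0 := by
    apply RatFunc.algebraMap_injective ℚ
    rw [map_zero]
    push_cast [map_add, map_sub, map_pow, map_mul, map_ofNat, hp, RatFunc.algebraMap_X]
    linear_combination hx
  exact aux_quartic p h0

end PolyLemmas

open WeierstrassCurve.Affine WeierstrassCurve.Affine.Point
open Classical

@[simp] lemma E₁_a₁ : E₁.a₁ = 0 := rfl
@[simp] lemma E₁_a₂ : E₁.a₂ = 0 := rfl
@[simp] lemma E₁_a₃ : E₁.a₃ = 0 := rfl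
@[simp] lemma E₁_a₄ : E₁.a₄ = -RatFunc.X := rfl
@[simp] lemma E₁_a₆ : E₁.a₆ = RatFunc.X := rfl

lemma E₁_negY (x y : RatFunc ℚ) : E₁.negY x y = -y := by
  simp [negY]

lemma two_ne_zero' : (2 : RatFunc ℚ) ≠ 0 := by
  intro h
  have h2 : (2 : Polynomial ℚ) = 0 :=
    RatFunc.algebraMap_injective ℚ (by rw [_root_.map_zero, map_ofNat]; exact h)
  norm_num at h2

/-- The point `(1, 1)` is a nonsingular point of `E₁`. -/
lemma hns : E₁.Nonsingular 1 1 := by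
  rw [nonsingular_iff, equation_iff]
  refine ⟨by simp, Or.inr ?_⟩
  simp only [E₁_a₁, E₁_a₃, zero_mul, sub_zero, mul_one]
  intro hc
  exact two_ne_zero' (by linear_combination hc)

/-- `E₁` has no point of order two. -/
lemma doub0 {x y : RatFunc ℚ} (h' : E₁.Nonsingular x y)
    (hadd : Point.some _ _ h' + Point.some _ _ h' = 0) : False := by
  by_cases hy : y = E₁.negY x y
  · have hy0 : y = 0 := by
      have h2 : 2 * y = 0 := by rw [E₁_negY] at hy; linear_combination hy
      rcases mul_eq_zero.mp h2 with h | h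
      · exact absurd h two_ne_zero'
      · exact h
    have heq := (equation_iff _ _).mp h'.1
    simp only [E₁_a₁, E₁_a₂, E₁_a₃, E₁_a₄, E₁_a₆] at heq
    exact rat_cubic x (by rw [hy0] at heq; linear_combination -heq)
  · rw [add_self_of_Y_ne hy] at hadd
    exact some_ne_zero _ hadd

/-- The point `(1,1)` on `E₁` is not twice another rational point. -/
lemma doubP (h : E₁.Nonsingular 1 1) {x y : RatFunc ℚ} (h' : E₁.Nonsingular x y)
    (hadd : Point.some _ _ h' + Point.some _ _ h' = Point.some _ _ h) : False := by
  by_cases hy : y = E₁.negY x y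
  · rw [add_of_Y_eq rfl hy] at hadd
    exact some_ne_zero h hadd.symm
  · rw [add_self_of_Y_ne hy] at hadd
    have hxx := (Point.some.inj hadd).1
    rw [slope_of_Y_ne rfl hy] at hxx
    simp only [addX, negY, E₁_a₁, E₁_a₂, E₁_a₃, E₁_a₄] at hxx
    have heq := (equation_iff _ _).mp h'.1
    simp only [E₁_a₁, E₁_a₂, E₁_a₃, E₁_a₄, E₁_a₆] at heq
    simp only [zero_mul, mul_zero, add_zero, sub_zero, zero_add, mul_one, sub_neg_eq_add]
      at hxx
    have hd : y + y ≠ 0 := by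
      rw [E₁_negY] at hy
      intro hc
      exact hy (by linear_combination hc)
    have key : (3 * x ^ 2 + -RatFunc.X) ^ 2 = (1 + x + x) * (y + y) ^ 2 := by
      have e : ((3 * x ^ 2 + -RatFunc.X) / (y + y)) ^ 2 * (y + y) ^ 2
          = (3 * x ^ 2 + -RatFunc.X) ^ 2 := by
        rw [div_pow]; exact div_mul_cancel₀ _ (pow_ne_zero 2 hd)
      linear_combination (y + y) ^ 2 * hxx - e
    apply rat_quartic x
    linear_combination key + (4 + 8 * x) * heq

end Stmt15Aux

open Classical in
/-- The point `P = (1,1)` on `E₁ : y² = x³ - t x + t` over `ℚ(t)` has infinite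
order in the group of `ℚ(t)`-rational points. -/
theorem stmt15 :
    E₁.Nonsingular 1 1 ∧
    ∀ h : E₁.Nonsingular 1 1,
      ¬ IsOfFinAddOrder (WeierstrassCurve.Affine.Point.some (h := h)) := by
  open WeierstrassCurve.Affine WeierstrassCurve.Affine.Point Stmt15Aux in
  refine ⟨hns, fun h hfin => ?_⟩
  set P := WeierstrassCurve.Affine.Point.some (h := h) with hPdef
  have hn : 0 < addOrderOf P := hfin.addOrderOf_pos
  have hzero : addOrderOf P • P = 0 := addOrderOf_nsmul_eq_zero P
  rcases Nat.even_or_odd (addOrderOf P) with ⟨m, hm⟩ | ⟨m, hm⟩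
  · -- the order is even, so some multiple of `P` is a point of order two
    have hQQ : m • P + m • P = 0 := by rw [← add_nsmul, ← hm]; exact hzero
    have hQ0 : m • P ≠ 0 := by
      intro h0
      have hdvd := addOrderOf_dvd_of_nsmul_eq_zero h0
      have := Nat.le_of_dvd (by omega) hdvd
      omega
    cases hQ : m • P with
    | zero => exact hQ0 (by rw [hQ]; rfl)
    | some _ _ h' => rw [hQ] at hQQ; exact doub0 h' hQQ
  · -- the order is odd, so `P` is twice some multiple of `P`
    have hQQ : (m + 1) • P + (m + 1) • P = P := by
      rw [← add_nsmul]
      have he : (m + 1) + (m + 1) = addOrderOf P + 1 := by omega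
      rw [he, add_nsmul, hzero, one_nsmul, zero_add]
    cases hQ : (m + 1) • P with
    | zero =>
      refine some_ne_zero h ?_
      rw [hPdef] at hQQ
      rw [hQ] at hQQ
      rw [← hQQ, ← zero_def]
      simp [← zero_def]
    | some _ _ h' => rw [hQ] at hQQ; exact doubP h h' hQQ
end
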